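/- For every PDL⁻ (identity-free PDL) formula φ: φ is valid on GRELsfinlin (i.e., ⟦φ⟧ˢ = W for every generalized structure S whose universal relation is a finite strict linear order) if and only if φ is derivable in the Hilbert system H⁻. -/

import Mathlib

/-! Statement 5: soundness and completeness of the Hilbert system `H⁻` for
identity-free PDL with respect to GRELsfinlin (finite strict linear orders). -/

/-- A generalized structure over term variables `A` and formula variables `P`,
with universe `W`. -/
structure GStruct (A P W : Type) where
  U : W → W → Prop
  rel : A → W → W → Prop
  rel_sub : ∀ a x y, rel a x y → U x y
  val : P → W → Prop

/-- The universal relation is a finite linear order (on a nonempty finite universe). -/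
def FinLin {A P W : Type} (S : GStruct A P W) : Prop :=
  Nonempty W ∧ Finite W ∧ (∀ x, S.U x x) ∧
    (∀ x y z, S.U x y → S.U y z → S.U x z) ∧
    (∀ x y, S.U x y → S.U y x → x = y) ∧ (∀ x y, S.U x y ∨ S.U y x)

/-- The universal relation is a finite strict linear order
(on a nonempty finite universe). -/
def SFinLin {A P W : Type} (S : GStruct A P W) : Prop :=
  Nonempty W ∧ Finite W ∧ (∀ x, ¬ S.U x x) ∧
    (∀ x y z, S.U x y → S.U y z → S.U x z) ∧
    (∀ x y, x ≠ y → S.U x y ∨ S.U y x)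
mutual
  /-- Formulas of identity-free PDL (PDL⁻). -/
  inductive MFml (A P : Type) : Type where
    | pv : P → MFml A P
    | imp : MFml A P → MFml A P → MFml A P
    | fls : MFml A P
    | box : MTrm A P → MFml A P → MFml A P
  /-- Terms of identity-free PDL (PDL⁻). -/
  inductive MTrm (A P : Type) : Type where
    | tv : A → MTrm A P
    | comp : MTrm A P → MTrm A P → MTrm A P
    | union : MTrm A P → MTrm A P → MTrm A P
    | plus : MTrm A P → MTrm A P
    | testL : MFml A P → MTrm A P → MTrm A P
    | testR : MTrm A P → MFml A P → MTrm A P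
end

namespace MFml
/-- ¬φ := φ → F -/
def neg {A P : Type} (φ : MFml A P) : MFml A P := .imp φ .fls
/-- T := ¬F -/
def tru {A P : Type} : MFml A P := neg .fls
/-- φ ∨ ψ := ¬φ → ψ -/
def or {A P : Type} (φ ψ : MFml A P) : MFml A P := .imp (neg φ) ψ
/-- φ ∧ ψ := ¬(¬φ ∨ ¬ψ) -/
def and {A P : Type} (φ ψ : MFml A P) : MFml A P := neg (or (neg φ) (neg ψ))
/-- φ ↔ ψ := (φ → ψ) ∧ (ψ → φ) -/
def iff {A P : Type} (φ ψ : MFml A P) : MFml A P := and (.imp φ ψ) (.imp ψ φ)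
/-- ⟨e⟩φ := ¬[e]¬φ -/
def dia {A P : Type} (e : MTrm A P) (φ : MFml A P) : MFml A P := neg (.box e (neg φ))
end MFml

mutual
  /-- Semantics of PDL⁻ formulas on a generalized structure. -/
  def msemF {A P W : Type} (S : GStruct A P W) : MFml A P → W → Prop
    | .pv p, x => S.val p x
    | .imp φ ψ, x => msemF S φ x → msemF S ψ x
    | .fls, _ => False
    | .box e φ, x => ∀ y, msemT S e x y → msemF S φ y
  /-- Semantics of PDL⁻ terms on a generalized structure. -/
  def msemT {A P W : Type} (S : GStruct A P W) : MTrm A P → W → W → Prop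
    | .tv a, x, y => S.rel a x y
    | .comp e f, x, z => ∃ y, msemT S e x y ∧ msemT S f y z
    | .union e f, x, y => msemT S e x y ∨ msemT S f x y
    | .plus e, x, y => Relation.TransGen (fun u v => msemT S e u v) x y
    | .testL ψ e, x, y => msemF S ψ x ∧ msemT S e x y
    | .testR e ψ, x, y => msemT S e x y ∧ msemF S ψ y
end
/-- Propositional formulas over variables `V`. -/
inductive PropF (V : Type) : Type where
  | pv : V → PropF V
  | imp : PropF V → PropF V → PropF V
  | fls : PropF V

/-- Evaluation of a propositional formula under a valuation. -/
def PropF.eval {V : Type} (v : V → Prop) : PropF V → Prop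
  | .pv p => v p
  | .imp a b => PropF.eval v a → PropF.eval v b
  | .fls => False

/-- Substitution instance of a propositional formula, substituting PDL⁻ formulas
for the propositional variables. -/
def PropF.inst {V A P : Type} (σ : V → MFml A P) : PropF V → MFml A P
  | .pv p => σ p
  | .imp a b => .imp (PropF.inst σ a) (PropF.inst σ b)
  | .fls => .fls

/-- The Hilbert system `H⁻` for PDL⁻ on finite strict linear orders. -/
inductive MProof {A P : Type} : MFml A P → Prop where
  /-- modus ponens -/
  | mp {φ ψ : MFml A P} : MProof φ → MProof (.imp φ ψ) → MProof ψ
  /-- necessitation -/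
  | nec {φ : MFml A P} (e : MTrm A P) : MProof φ → MProof (.box e φ)
  /-- (Prop): all substitution-instances of valid propositional formulas -/
  | prop {V : Type} (χ : PropF V) (hval : ∀ v, PropF.eval v χ) (σ : V → MFml A P) :
      MProof (PropF.inst σ χ)
  /-- (;) -/
  | compAx (e f : MTrm A P) (φ : MFml A P) :
      MProof (MFml.iff (.box (.comp e f) φ) (.box e (.box f φ)))
  /-- (+) -/
  | unionAx (e f : MTrm A P) (φ : MFml A P) :
      MProof (MFml.iff (.box (.union e f) φ) (MFml.and (.box e φ) (.box f φ)))
  /-- (⁺) -/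
  | plusAx (e : MTrm A P) (φ : MFml A P) :
      MProof (MFml.iff (.box (.plus e) φ) (MFml.and (.box e φ) (.box e (.box (.plus e) φ))))
  /-- (⁺-Ind) -/
  | plusInd (e : MTrm A P) (φ : MFml A P) :
      MProof (.imp (MFml.and (.box e φ) (.box (.plus e) (.imp φ (.box e φ)))) (.box (.plus e) φ))
  /-- (?-L) -/
  | testLAx (ψ : MFml A P) (e : MTrm A P) (φ : MFml A P) :
      MProof (MFml.iff (.box (.testL ψ e) φ) (.imp ψ (.box e φ)))
  /-- (?-R) -/
  | testRAx (e : MTrm A P) (ψ φ : MFml A P) :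
      MProof (MFml.iff (.box (.testR e ψ) φ) (.box e (.imp ψ φ)))
  /-- (K) -/
  | kAx (e : MTrm A P) (φ ψ : MFml A P) :
      MProof (.imp (.box e (.imp φ ψ)) (.imp (.box e φ) (.box e ψ)))
  /-- (Löb-⁺) -/
  | loeb (e : MTrm A P) (φ : MFml A P) :
      MProof (.imp (.box (.plus e) (.imp (.box (.plus e) φ) φ)) (.box (.plus e) φ))


/-! ### Auxiliary development for the completeness proof -/

namespace PDLaux

open MFml

variable {A P : Type}

/-- Mirror of `MFml.neg` in `PropF`. -/
def PropF.pneg {V : Type} (x : PropF V) : PropF V := .imp x .fls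
/-- Mirror of `MFml.or`. -/
def PropF.por {V : Type} (x y : PropF V) : PropF V := .imp (PropF.pneg x) y
/-- Mirror of `MFml.and`. -/
def PropF.pand {V : Type} (x y : PropF V) : PropF V :=
  PropF.pneg (PropF.por (PropF.pneg x) (PropF.pneg y))

theorem eval_pneg {V : Type} (v : V → Prop) (x : PropF V) :
    PropF.eval v (PropF.pneg x) ↔ ¬ PropF.eval v x := by
  simp [PropF.pneg, PropF.eval]

theorem eval_pand {V : Type} (v : V → Prop) (x y : PropF V) :
    PropF.eval v (PropF.pand x y) ↔ (PropF.eval v x ∧ PropF.eval v y) := by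
  simp [PropF.pand, PropF.por, PropF.pneg, PropF.eval]

theorem eval_por {V : Type} (v : V → Prop) (x y : PropF V) :
    PropF.eval v (PropF.por x y) ↔ (PropF.eval v x ∨ PropF.eval v y) := by
  simp [PropF.por, PropF.pneg, PropF.eval]; tauto

theorem tautInst (χ : PropF (MFml A P)) (h : ∀ v, PropF.eval v χ) :
    MProof (PropF.inst id χ) := MProof.prop χ h id

/- In the helpers below, `⊢ g.imp a` plays the role of "a is provable from premiss g". -/

theorem pI {g a : MFml A P} (h : MProof a) : MProof (g.imp a) := by
  have t : MProof (a.imp (g.imp a)) :=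
    tautInst (.imp (.pv a) (.imp (.pv g) (.pv a))) (fun v => by simp [PropF.eval]; tauto)
  exact h.mp t

theorem pId (g : MFml A P) : MProof (g.imp g) :=
  tautInst (.imp (.pv g) (.pv g)) (fun v => by simp [PropF.eval])

theorem pMP {g a b : MFml A P} (h1 : MProof (g.imp (a.imp b))) (h2 : MProof (g.imp a)) :
    MProof (g.imp b) := by
  have t : MProof ((g.imp (a.imp b)).imp ((g.imp a).imp (g.imp b))) :=
    tautInst (.imp (.imp (.pv g) (.imp (.pv a) (.pv b)))
      (.imp (.imp (.pv g) (.pv a)) (.imp (.pv g) (.pv b))))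
      (fun v => by simp [PropF.eval]; tauto)
  exact h2.mp (h1.mp t)

theorem pTrans {a b c : MFml A P} (h1 : MProof (a.imp b)) (h2 : MProof (b.imp c)) :
    MProof (a.imp c) :=
  pMP (pI h2) h1

theorem pAndE1 (a b : MFml A P) : MProof ((MFml.and a b).imp a) :=
  tautInst (.imp (PropF.pand (.pv a) (.pv b)) (.pv a))
    (fun v => by simp only [PropF.eval, eval_pand]; tauto)

theorem pAndE2 (a b : MFml A P) : MProof ((MFml.and a b).imp b) :=
  tautInst (.imp (PropF.pand (.pv a) (.pv b)) (.pv b))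
    (fun v => by simp only [PropF.eval, eval_pand]; tauto)

theorem pAndI {g a b : MFml A P} (h1 : MProof (g.imp a)) (h2 : MProof (g.imp b)) :
    MProof (g.imp (MFml.and a b)) := by
  have t : MProof ((g.imp a).imp ((g.imp b).imp (g.imp (MFml.and a b)))) :=
    tautInst (.imp (.imp (.pv g) (.pv a)) (.imp (.imp (.pv g) (.pv b))
      (.imp (.pv g) (PropF.pand (.pv a) (.pv b)))))
      (fun v => by simp only [PropF.eval, eval_pand]; tauto)
  exact h2.mp (h1.mp t)

theorem pNegE {g a : MFml A P} (h1 : MProof (g.imp a)) (h2 : MProof (g.imp a.neg)) :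
    MProof g.neg := by
  have t : MProof ((g.imp a).imp ((g.imp a.neg).imp g.neg)) :=
    tautInst (.imp (.imp (.pv g) (.pv a)) (.imp (.imp (.pv g) (PropF.pneg (.pv a)))
      (PropF.pneg (.pv g))))
      (fun v => by simp only [PropF.eval, eval_pneg]; tauto)
  exact h2.mp (h1.mp t)

theorem pNegI {g a : MFml A P} (h1 : MProof (g.imp a.neg)) : MProof ((g.imp a).imp g.neg) := by
  have t : MProof ((g.imp a.neg).imp ((g.imp a).imp g.neg)) :=
    tautInst (.imp (.imp (.pv g) (PropF.pneg (.pv a))) (.imp (.imp (.pv g) (.pv a))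
      (PropF.pneg (.pv g))))
      (fun v => by simp only [PropF.eval, eval_pneg]; tauto)
  exact h1.mp t

theorem dneThm (a : MFml A P) : MProof (a.neg.neg.imp a) :=
  tautInst (.imp (PropF.pneg (PropF.pneg (.pv a))) (.pv a))
    (fun v => by simp only [PropF.eval, eval_pneg]; tauto)

theorem dniThm (a : MFml A P) : MProof (a.imp a.neg.neg) :=
  tautInst (.imp (.pv a) (PropF.pneg (PropF.pneg (.pv a))))
    (fun v => by simp only [PropF.eval, eval_pneg]; tauto)

/-- contraposition (meta form) -/
theorem contrap {a b : MFml A P} (h : MProof (a.imp b)) : MProof (b.neg.imp a.neg) := by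
  have t : MProof ((a.imp b).imp ((b.neg).imp a.neg)) :=
    tautInst (.imp (.imp (.pv a) (.pv b)) (.imp (PropF.pneg (.pv b)) (PropF.pneg (.pv a))))
      (fun v => by simp only [PropF.eval, eval_pneg]; tauto)
  exact h.mp t

theorem iffE1 {a b : MFml A P} (h : MProof (MFml.iff a b)) : MProof (a.imp b) :=
  h.mp (pAndE1 _ _)

theorem iffE2 {a b : MFml A P} (h : MProof (MFml.iff a b)) : MProof (b.imp a) :=
  h.mp (pAndE2 _ _)

/-! ### Finite conjunctions -/

/-- Conjunction of a list of formulas. -/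
def conjL : List (MFml A P) → MFml A P
  | [] => MFml.tru
  | ξ :: l => MFml.and ξ (conjL l)

theorem conjL_mem {l : List (MFml A P)} {ξ : MFml A P} (h : ξ ∈ l) :
    MProof ((conjL l).imp ξ) := by
  induction l with
  | nil => cases h
  | cons η l ih =>
    rcases List.mem_cons.1 h with h | h
    · subst h; exact pAndE1 _ _
    · exact pTrans (pAndE2 _ _) (ih h)

theorem conjL_intro {g : MFml A P} {l : List (MFml A P)}
    (h : ∀ ξ ∈ l, MProof (g.imp ξ)) : MProof (g.imp (conjL l)) := by
  induction l with
  | nil =>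
    exact pI (tautInst (PropF.pneg .fls) (fun v => by simp [PropF.eval, eval_pneg]))
  | cons η l ih =>
    exact pAndI (h η (by simp)) (ih (fun ξ hξ => h ξ (by simp [hξ])))

/-! ### Basic modal reasoning -/

theorem reg {a b : MFml A P} (e : MTrm A P) (h : MProof (a.imp b)) :
    MProof ((MFml.box e a).imp (MFml.box e b)) :=
  (MProof.nec e h).mp (MProof.kAx e a b)

theorem boxTru (e : MTrm A P) : MProof (MFml.box e (MFml.tru : MFml A P)) :=
  MProof.nec e (tautInst (PropF.pneg .fls) (fun v => by simp [PropF.eval, eval_pneg]))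

theorem pBoxAndI {g a b : MFml A P} {e : MTrm A P}
    (h1 : MProof (g.imp (MFml.box e a))) (h2 : MProof (g.imp (MFml.box e b))) :
    MProof (g.imp (MFml.box e (MFml.and a b))) := by
  have t1 : MProof (a.imp (b.imp (MFml.and a b))) :=
    tautInst (.imp (.pv a) (.imp (.pv b) (PropF.pand (.pv a) (.pv b))))
      (fun v => by simp only [PropF.eval, eval_pand]; tauto)
  have t2 : MProof ((MFml.box e a).imp (MFml.box e (b.imp (MFml.and a b)))) := reg e t1
  have t3 : MProof ((MFml.box e (b.imp (MFml.and a b))).imp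
      ((MFml.box e b).imp (MFml.box e (MFml.and a b)))) := MProof.kAx e _ _
  exact pMP (pTrans (pTrans h1 t2) t3) h2

theorem pBoxConjL {g : MFml A P} {e : MTrm A P} {l : List (MFml A P)}
    (h : ∀ ξ ∈ l, MProof (g.imp (MFml.box e ξ))) : MProof (g.imp (MFml.box e (conjL l))) := by
  induction l with
  | nil => exact pI (boxTru e)
  | cons η l ih =>
    exact pBoxAndI (h η (by simp)) (ih (fun ξ hξ => h ξ (by simp [hξ])))

/-! ### Diamond lemmas;  `dia e a = neg (box e (neg a))` -/

theorem diaMono {a b : MFml A P} (e : MTrm A P) (h : MProof (a.imp b)) :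
    MProof ((MFml.dia e a).imp (MFml.dia e b)) :=
  contrap (reg e (contrap h))

/-- From `g ⊢ ¬[e]b` conclude `g ⊢ ⟨e⟩¬b`. -/
theorem pDiaOfNegBox {g b : MFml A P} {e : MTrm A P}
    (h : MProof (g.imp (MFml.box e b).neg)) : MProof (g.imp (MFml.dia e b.neg)) :=
  pTrans h (contrap (reg e (dneThm b)))

/-- `g ⊢ ⟨e⟩a` and `g ⊢ [e]b` imply `g ⊢ ⟨e⟩(a ∧ b)`. -/
theorem pDiaBoxAnd {g a b : MFml A P} {e : MTrm A P}
    (h1 : MProof (g.imp (MFml.dia e a))) (h2 : MProof (g.imp (MFml.box e b))) :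
    MProof (g.imp (MFml.dia e (MFml.and a b))) := by
  -- [e]¬(a∧b) ∧ [e]b → [e]¬a
  have t1 : MProof (((MFml.and a b).neg).imp (b.imp a.neg)) :=
    tautInst (.imp (PropF.pneg (PropF.pand (.pv a) (.pv b)))
        (.imp (.pv b) (PropF.pneg (.pv a))))
      (fun v => by simp only [PropF.eval, eval_pneg, eval_pand]; tauto)
  have t2 : MProof ((MFml.box e ((MFml.and a b).neg)).imp
      ((MFml.box e b).imp (MFml.box e a.neg))) :=
    pTrans (reg e t1) (MProof.kAx e _ _)
  -- propositional: from g→¬[e]¬a, g→[e]b, and t2, conclude g→¬[e]¬(a∧b)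
  have t3 : MProof (((MFml.box e ((MFml.and a b).neg)).imp
        ((MFml.box e b).imp (MFml.box e a.neg))).imp
      ((g.imp (MFml.box e a.neg).neg).imp ((g.imp (MFml.box e b)).imp
        (g.imp (MFml.box e ((MFml.and a b).neg)).neg)))) :=
    tautInst (.imp (.imp (.pv (MFml.box e ((MFml.and a b).neg)))
        (.imp (.pv (MFml.box e b)) (.pv (MFml.box e a.neg))))
      (.imp (.imp (.pv g) (PropF.pneg (.pv (MFml.box e a.neg))))
        (.imp (.imp (.pv g) (.pv (MFml.box e b)))
          (.imp (.pv g) (PropF.pneg (.pv (MFml.box e ((MFml.and a b).neg))))))))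
      (fun v => by simp only [PropF.eval, eval_pneg]; tauto)
  exact h2.mp (h1.mp (t2.mp t3))

/-- If `⊢ a → b ∨ c` then `⊢ ⟨e⟩a → ⟨e⟩b ∨ ⟨e⟩c`. -/
theorem diaOr {a b c : MFml A P} (e : MTrm A P) (h : MProof (a.imp (MFml.or b c))) :
    MProof ((MFml.dia e a).imp (MFml.or (MFml.dia e b) (MFml.dia e c))) := by
  have t1 : MProof ((MFml.and b.neg c.neg).imp a.neg) := by
    have t : MProof ((a.imp (MFml.or b c)).imp ((MFml.and b.neg c.neg).imp a.neg)) :=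
      tautInst (.imp (.imp (.pv a) (PropF.por (.pv b) (.pv c)))
          (.imp (PropF.pand (PropF.pneg (.pv b)) (PropF.pneg (.pv c))) (PropF.pneg (.pv a))))
        (fun v => by simp only [PropF.eval, eval_pneg, eval_pand, eval_por]; tauto)
    exact h.mp t
  have t2 : MProof ((MFml.and (MFml.box e b.neg) (MFml.box e c.neg)).imp
      (MFml.box e a.neg)) := by
    have c1 : MProof ((MFml.and (MFml.box e b.neg) (MFml.box e c.neg)).imp
        (MFml.box e (MFml.and b.neg c.neg))) :=
      pBoxAndI (pAndE1 _ _) (pAndE2 _ _)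
    exact pTrans c1 (reg e t1)
  -- propositional rearrangement
  have t3 : MProof (((MFml.and (MFml.box e b.neg) (MFml.box e c.neg)).imp
        (MFml.box e a.neg)).imp
      ((MFml.box e a.neg).neg.imp (MFml.or (MFml.box e b.neg).neg (MFml.box e c.neg).neg))) :=
    tautInst (.imp (.imp (PropF.pand (.pv (MFml.box e b.neg)) (.pv (MFml.box e c.neg)))
        (.pv (MFml.box e a.neg)))
      (.imp (PropF.pneg (.pv (MFml.box e a.neg)))
        (PropF.por (PropF.pneg (.pv (MFml.box e b.neg)))
          (PropF.pneg (.pv (MFml.box e c.neg))))))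
      (fun v => by simp only [PropF.eval, eval_pneg, eval_pand, eval_por]; tauto)
  exact t2.mp t3

end PDLaux

namespace PDLaux

variable {A P : Type}

/-! ### Derived laws for `plus`, `union`, tests -/

theorem plusUnfold1 (e : MTrm A P) (a : MFml A P) :
    MProof ((MFml.box (.plus e) a).imp (MFml.box e a)) :=
  pTrans (iffE1 (MProof.plusAx e a)) (pAndE1 _ _)

theorem plusUnfold2 (e : MTrm A P) (a : MFml A P) :
    MProof ((MFml.box (.plus e) a).imp (MFml.box e (MFml.box (.plus e) a))) :=
  pTrans (iffE1 (MProof.plusAx e a)) (pAndE2 _ _)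

theorem plusFold (e : MTrm A P) (a : MFml A P) :
    MProof ((MFml.and (MFml.box e a) (MFml.box e (MFml.box (.plus e) a))).imp
      (MFml.box (.plus e) a)) :=
  iffE2 (MProof.plusAx e a)

/-- Transitivity: `[e⁺]a → [e⁺][e⁺]a`. -/
theorem plusTrans (e : MTrm A P) (a : MFml A P) :
    MProof ((MFml.box (.plus e) a).imp (MFml.box (.plus e) (MFml.box (.plus e) a))) := by
  set φ := MFml.box (.plus e) a with hφ
  have h1 : MProof (φ.imp (MFml.box e φ)) := plusUnfold2 e a
  have h2 : MProof (MFml.box (.plus e) (φ.imp (MFml.box e φ))) := MProof.nec _ h1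
  have h3 : MProof (φ.imp (MFml.and (MFml.box e φ)
      (MFml.box (.plus e) (φ.imp (MFml.box e φ))))) :=
    pAndI h1 (pI h2)
  exact pTrans h3 (MProof.plusInd e φ)

/-- `g ⊢ [e⁺]x → [e⁺]y` from `⊢ x → y`. -/
theorem unionE1 (e f : MTrm A P) (a : MFml A P) :
    MProof ((MFml.box (.union e f) a).imp (MFml.box e a)) :=
  pTrans (iffE1 (MProof.unionAx e f a)) (pAndE1 _ _)

theorem unionE2 (e f : MTrm A P) (a : MFml A P) :
    MProof ((MFml.box (.union e f) a).imp (MFml.box f a)) :=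
  pTrans (iffE1 (MProof.unionAx e f a)) (pAndE2 _ _)

theorem unionI (e f : MTrm A P) (a : MFml A P) :
    MProof ((MFml.and (MFml.box e a) (MFml.box f a)).imp (MFml.box (.union e f) a)) :=
  iffE2 (MProof.unionAx e f a)

/-- Löb in diamond form: `⟨e⁺⟩a → ⟨e⁺⟩(a ∧ [e⁺]¬a)`. -/
theorem loebDia (e : MTrm A P) (a : MFml A P) :
    MProof ((MFml.dia (.plus e) a).imp
      (MFml.dia (.plus e) (MFml.and a (MFml.box (.plus e) a.neg)))) := by
  set x := MFml.box (.plus e) a.neg with hx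
  have t1 : MProof (((MFml.and a x).neg).imp (x.imp a.neg)) :=
    tautInst (.imp (PropF.pneg (PropF.pand (.pv a) (.pv x)))
        (.imp (.pv x) (PropF.pneg (.pv a))))
      (fun v => by simp only [PropF.eval, eval_pneg, eval_pand]; tauto)
  have h1 : MProof ((MFml.box (.plus e) ((MFml.and a x).neg)).imp
      (MFml.box (.plus e) (x.imp a.neg))) := reg _ t1
  have h2 := contrap h1
  have h3 := contrap (MProof.loeb e a.neg)
  exact pTrans h3 h2

/-- `⟨e⟩a → ⟨e⁺⟩a`. -/
theorem diaPlusOfDia (e : MTrm A P) (a : MFml A P) :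
    MProof ((MFml.dia e a).imp (MFml.dia (.plus e) a)) :=
  contrap (plusUnfold1 e a.neg)

end PDLaux

namespace PDLaux

open Classical in
/-- Consistency of a formula. -/
def Con {A P : Type} (g : MFml A P) : Prop := ¬ MProof g.neg

section ConLind

variable {A P : Type}

theorem conMono {g g' : MFml A P} (h : MProof (g.imp g')) (hc : Con g) : Con g' :=
  fun hn => hc (pTrans h hn)

open Classical

/-- literal conjunction determined by a finite set `s` over a list `l`. -/
noncomputable def litConj (l : List (MFml A P)) (s : Finset (MFml A P)) : MFml A P :=
  conjL (l.map (fun ξ => if ξ ∈ s then ξ else ξ.neg))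

theorem litConj_congr {l : List (MFml A P)} {s s' : Finset (MFml A P)}
    (h : ∀ ζ ∈ l, (ζ ∈ s ↔ ζ ∈ s')) : litConj l s = litConj l s' := by
  unfold litConj
  congr 1
  apply List.map_congr_left
  intro ζ hζ
  by_cases hm : ζ ∈ s
  · rw [if_pos hm, if_pos ((h ζ hζ).1 hm)]
  · rw [if_neg hm, if_neg (fun hm' => hm ((h ζ hζ).2 hm'))]

theorem litConj_prv_mem {l : List (MFml A P)} {s : Finset (MFml A P)} {ξ : MFml A P}
    (hl : ξ ∈ l) (hs : ξ ∈ s) : MProof ((litConj l s).imp ξ) := by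
  unfold litConj
  apply conjL_mem
  rw [List.mem_map]
  exact ⟨ξ, hl, if_pos hs⟩

theorem litConj_prv_memneg {l : List (MFml A P)} {s : Finset (MFml A P)} {ξ : MFml A P}
    (hl : ξ ∈ l) (hs : ξ ∉ s) : MProof ((litConj l s).imp ξ.neg) := by
  unfold litConj
  apply conjL_mem
  rw [List.mem_map]
  exact ⟨ξ, hl, if_neg hs⟩

variable (M : MFml A P → MFml A P)
variable (g : MFml A P)

theorem lindSplit
    (hM : ∀ x y : MFml A P, MProof (x.imp y) → MProof ((M x).imp (M y)))
    (hOr : ∀ x y : MFml A P, MProof ((M (MFml.or x y)).imp (MFml.or (M x) (M y))))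
    (δ ξ : MFml A P) (h : Con (MFml.and g (M δ))) :
    Con (MFml.and g (M (MFml.and δ ξ))) ∨ Con (MFml.and g (M (MFml.and δ ξ.neg))) := by
  by_contra hc
  push_neg at hc
  obtain ⟨h1, h2⟩ := hc
  apply h
  unfold Con at h1 h2
  rw [not_not] at h1 h2
  -- δ → (δ∧ξ) ∨ (δ∧¬ξ)
  have tsplit : MProof (δ.imp (MFml.or (MFml.and δ ξ) (MFml.and δ ξ.neg))) :=
    tautInst (.imp (.pv δ) (PropF.por (PropF.pand (.pv δ) (.pv ξ))
        (PropF.pand (.pv δ) (PropF.pneg (.pv ξ)))))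
      (fun v => by simp only [PropF.eval, eval_pneg, eval_pand, eval_por]; tauto)
  have hd : MProof ((M δ).imp (MFml.or (M (MFml.and δ ξ)) (M (MFml.and δ ξ.neg)))) :=
    pTrans (hM _ _ tsplit) (hOr _ _)
  -- propositional combination
  have t : MProof (((M δ).imp (MFml.or (M (MFml.and δ ξ)) (M (MFml.and δ ξ.neg)))).imp
      ((MFml.and g (M (MFml.and δ ξ))).neg.imp
        ((MFml.and g (M (MFml.and δ ξ.neg))).neg.imp (MFml.and g (M δ)).neg))) := by
    refine tautInst (.imp (.imp (.pv (M δ)) (PropF.por (.pv (M (MFml.and δ ξ)))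
        (.pv (M (MFml.and δ ξ.neg)))))
      (.imp (PropF.pneg (PropF.pand (.pv g) (.pv (M (MFml.and δ ξ)))))
        (.imp (PropF.pneg (PropF.pand (.pv g) (.pv (M (MFml.and δ ξ.neg)))))
          (PropF.pneg (PropF.pand (.pv g) (.pv (M δ)))))))
      (fun v => ?_)
    simp only [PropF.eval, eval_pneg, eval_pand, eval_por]
    tauto
  exact h2.mp (h1.mp (hd.mp t))

theorem lind
    (hM : ∀ x y : MFml A P, MProof (x.imp y) → MProof ((M x).imp (M y)))
    (hOr : ∀ x y : MFml A P, MProof ((M (MFml.or x y)).imp (MFml.or (M x) (M y))))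
    (l : List (MFml A P)) (hnd : l.Nodup) (δ : MFml A P)
    (h : Con (MFml.and g (M δ))) :
    ∃ s : Finset (MFml A P), (∀ x ∈ s, x ∈ l) ∧
      Con (MFml.and g (M (MFml.and δ (litConj l s)))) := by
  induction l generalizing δ with
  | nil =>
    refine ⟨∅, by intro x hx; exact absurd hx (Finset.notMem_empty x), ?_⟩
    have tad : MProof (δ.imp (MFml.and δ (litConj [] (∅ : Finset (MFml A P))))) := by
      have : litConj ([] : List (MFml A P)) (∅ : Finset (MFml A P)) = MFml.tru := rfl
      rw [this]
      exact pAndI (pId δ) (pI (tautInst (PropF.pneg .fls)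
        (fun v => by simp [PropF.eval, eval_pneg])))
    exact conMono (pAndI (pAndE1 _ _) (pTrans (pAndE2 _ _) (hM _ _ tad))) h
  | cons ξ l ih =>
    have hnd' : l.Nodup := hnd.of_cons
    have hξl : ξ ∉ l := by
      intro hc; exact (List.nodup_cons.1 hnd).1 hc
    rcases lindSplit M g hM hOr δ ξ h with hcon | hcon
    · obtain ⟨s, hs, hcon'⟩ := ih hnd' _ hcon
      refine ⟨insert ξ s, ?_, ?_⟩
      · intro x hx
        rcases Finset.mem_insert.1 hx with h | h
        · subst h; exact List.mem_cons_self
        · exact List.mem_cons_of_mem _ (hs x h)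
      · have hlc : litConj (ξ :: l) (insert ξ s) =
            MFml.and ξ (litConj l s) := by
          have e1 : litConj (ξ :: l) (insert ξ s) =
              MFml.and ξ (litConj l (insert ξ s)) := by
            unfold litConj
            simp only [List.map_cons, conjL, if_pos (Finset.mem_insert_self ξ s)]
          rw [e1, litConj_congr (s := insert ξ s) (s' := s) ?_]
          intro ζ hζ
          have : ζ ≠ ξ := fun hc => hξl (hc ▸ hζ)
          simp [Finset.mem_insert, this]
        rw [hlc]
        refine conMono (pAndI (pAndE1 _ _) (pTrans (pAndE2 _ _) (hM _ _ ?_))) hcon'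
        exact tautInst (.imp (PropF.pand (PropF.pand (.pv δ) (.pv ξ)) (.pv (litConj l s)))
            (PropF.pand (.pv δ) (PropF.pand (.pv ξ) (.pv (litConj l s)))))
          (fun v => by simp only [PropF.eval, eval_pand]; tauto)
    · obtain ⟨s, hs, hcon'⟩ := ih hnd' _ hcon
      have hξs : ξ ∉ s := fun hc => hξl (hs ξ hc)
      refine ⟨s, ?_, ?_⟩
      · intro x hx
        exact List.mem_cons_of_mem _ (hs x hx)
      · have hlc : litConj (ξ :: l) s = MFml.and ξ.neg (litConj l s) := by
          unfold litConj
          simp only [List.map_cons, conjL, if_neg hξs]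
        rw [hlc]
        refine conMono (pAndI (pAndE1 _ _) (pTrans (pAndE2 _ _) (hM _ _ ?_))) hcon'
        exact tautInst (.imp (PropF.pand (PropF.pand (.pv δ) (.pv ξ.neg)) (.pv (litConj l s)))
            (PropF.pand (.pv δ) (PropF.pand (.pv ξ.neg) (.pv (litConj l s)))))
          (fun v => by simp only [PropF.eval, eval_pand]; tauto)

/-- From consistency of `g ∧ M y` get consistency of `y`. -/
theorem lindCon
    (hBot : ∀ x : MFml A P, MProof x.neg → MProof (M x).neg)
    {y : MFml A P} (h : Con (MFml.and g (M y))) : Con y := by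
  intro hy
  apply h
  have h1 : MProof (M y).neg := hBot _ hy
  have t : MProof ((M y).neg.imp (MFml.and g (M y)).neg) :=
    tautInst (.imp (PropF.pneg (.pv (M y))) (PropF.pneg (PropF.pand (.pv g) (.pv (M y)))))
      (fun v => by simp only [PropF.eval, eval_pneg, eval_pand]; tauto)
  exact h1.mp t

end ConLind

section MInstances

variable {A P : Type}

theorem hM_id : ∀ x y : MFml A P, MProof (x.imp y) → MProof ((id x).imp (id y)) :=
  fun _ _ h => h

theorem hOr_id : ∀ x y : MFml A P, MProof ((id (MFml.or x y)).imp (MFml.or (id x) (id y))) :=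
  fun x y => pId _

theorem hBot_id : ∀ x : MFml A P, MProof x.neg → MProof ((id x)).neg := fun _ h => h

theorem hM_dia (e : MTrm A P) :
    ∀ x y : MFml A P, MProof (x.imp y) → MProof ((MFml.dia e x).imp (MFml.dia e y)) :=
  fun _ _ h => diaMono e h

theorem hOr_dia (e : MTrm A P) : ∀ x y : MFml A P,
    MProof ((MFml.dia e (MFml.or x y)).imp (MFml.or (MFml.dia e x) (MFml.dia e y))) :=
  fun x y => diaOr e (pId _)

theorem hBot_dia (e : MTrm A P) : ∀ x : MFml A P,
    MProof x.neg → MProof (MFml.dia e x).neg :=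
  fun x h => (MProof.nec e h).mp (dniThm _)

end MInstances

end PDLaux

namespace PDLaux

section Closure

variable {A P : Type} [DecidableEq (MFml A P)]

mutual
/-- Fischer–Ladner style closure of a formula. -/
def clF : MFml A P → Finset (MFml A P)
  | .pv p => {.pv p}
  | .imp a b => insert (.imp a b) (clF a ∪ clF b)
  | .fls => {.fls}
  | .box e ψ => boxcl e ψ ∪ clF ψ
termination_by φ => sizeOf φ
decreasing_by all_goals simp <;> omega
/-- Closure boxes generated by `[e]ψ`. -/
def boxcl : MTrm A P → MFml A P → Finset (MFml A P)
  | .tv a, ψ => {.box (.tv a) ψ}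
  | .comp e f, ψ =>
      insert (.box (.comp e f) ψ) (boxcl e (.box f ψ) ∪ boxcl f ψ)
  | .union e f, ψ => insert (.box (.union e f) ψ) (boxcl e ψ ∪ boxcl f ψ)
  | .plus e, ψ =>
      insert (.box (.plus e) ψ) (boxcl e ψ ∪ boxcl e (.box (.plus e) ψ))
  | .testL χ e, ψ => insert (.box (.testL χ e) ψ) (clF χ ∪ boxcl e ψ)
  | .testR e χ, ψ =>
      insert (.box (.testR e χ) ψ) (insert (.imp χ ψ) (clF χ ∪ boxcl e (.imp χ ψ)))
termination_by e ψ => sizeOf e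
decreasing_by all_goals simp <;> omega
end

theorem boxcl_self (e : MTrm A P) (ψ : MFml A P) : MFml.box e ψ ∈ boxcl e ψ := by
  cases e <;> simp [boxcl]

theorem clF_self (ξ : MFml A P) : ξ ∈ clF ξ := by
  cases ξ with
  | pv p => simp [clF]
  | imp a b => simp [clF]
  | fls => simp [clF]
  | box e ψ =>
    rw [clF]
    exact Finset.mem_union_left _ (boxcl_self e ψ)

mutual
theorem clF_trans : ∀ (φ : MFml A P), ∀ α ∈ clF φ, clF α ⊆ clF φ
  | .pv p => by
    intro α hα
    simp only [clF, Finset.mem_singleton] at hα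
    subst hα; simp [clF]
  | .fls => by
    intro α hα
    simp only [clF, Finset.mem_singleton] at hα
    subst hα; simp [clF]
  | .imp a b => by
    intro α hα
    rw [clF] at hα
    rcases Finset.mem_insert.1 hα with h | h
    · subst h; exact subset_rfl
    · rcases Finset.mem_union.1 h with h | h
      · refine (clF_trans a α h).trans ?_
        intro x hx
        simp only [clF, Finset.mem_insert, Finset.mem_union]
        tauto
      · refine (clF_trans b α h).trans ?_
        intro x hx
        simp only [clF, Finset.mem_insert, Finset.mem_union]
        tauto
  | .box e ψ => by
    intro α hα
    rw [clF] at hα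
    rcases Finset.mem_union.1 hα with h | h
    · refine (boxcl_trans e ψ α h).trans ?_
      rw [clF]
    · refine (clF_trans ψ α h).trans ?_
      rw [clF]
      exact Finset.subset_union_right

termination_by φ => sizeOf φ
decreasing_by all_goals simp <;> omega

theorem boxcl_trans : ∀ (e : MTrm A P) (ψ : MFml A P), ∀ α ∈ boxcl e ψ,
    clF α ⊆ boxcl e ψ ∪ clF ψ
  | .tv a, ψ => by
    intro α hα
    simp only [boxcl, Finset.mem_singleton] at hα
    subst hα
    rw [clF, boxcl]
  | .comp e f, ψ => by
    intro α hα
    rw [boxcl] at hα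
    rcases Finset.mem_insert.1 hα with h | h
    · subst h
      rw [clF, boxcl]
    · rcases Finset.mem_union.1 h with h | h
      · refine (boxcl_trans e (.box f ψ) α h).trans ?_
        intro x hx
        rw [clF] at hx
        simp only [boxcl, Finset.mem_union, Finset.mem_insert] at hx ⊢
        tauto
      · refine (boxcl_trans f ψ α h).trans ?_
        intro x hx
        simp only [boxcl, Finset.mem_union, Finset.mem_insert] at hx ⊢
        tauto
  | .union e f, ψ => by
    intro α hα
    rw [boxcl] at hα
    rcases Finset.mem_insert.1 hα with h | h
    · subst h; rw [clF, boxcl]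
    · rcases Finset.mem_union.1 h with h | h
      · refine (boxcl_trans e ψ α h).trans ?_
        intro x hx
        simp only [boxcl, Finset.mem_union, Finset.mem_insert] at hx ⊢
        tauto
      · refine (boxcl_trans f ψ α h).trans ?_
        intro x hx
        simp only [boxcl, Finset.mem_union, Finset.mem_insert] at hx ⊢
        tauto
  | .plus e, ψ => by
    intro α hα
    rw [boxcl] at hα
    rcases Finset.mem_insert.1 hα with h | h
    · subst h; rw [clF, boxcl]
    · rcases Finset.mem_union.1 h with h | h
      · refine (boxcl_trans e ψ α h).trans ?_
        intro x hx
        simp only [boxcl, Finset.mem_union, Finset.mem_insert] at hx ⊢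
        tauto
      · refine (boxcl_trans e (.box (.plus e) ψ) α h).trans ?_
        intro x hx
        rw [clF] at hx
        simp only [boxcl, Finset.mem_union, Finset.mem_insert] at hx ⊢
        tauto
  | .testL χ e, ψ => by
    intro α hα
    rw [boxcl] at hα
    rcases Finset.mem_insert.1 hα with h | h
    · subst h; rw [clF, boxcl]
    · rcases Finset.mem_union.1 h with h | h
      · refine (clF_trans χ α h).trans ?_
        intro x hx
        simp only [boxcl, Finset.mem_union, Finset.mem_insert]
        tauto
      · refine (boxcl_trans e ψ α h).trans ?_
        intro x hx
        simp only [boxcl, Finset.mem_union, Finset.mem_insert] at hx ⊢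
        tauto
  | .testR e χ, ψ => by
    intro α hα
    rw [boxcl] at hα
    rcases Finset.mem_insert.1 hα with h | h
    · subst h; rw [clF, boxcl]
    · rcases Finset.mem_insert.1 h with h | h
      · subst h
        intro x hx
        rw [clF] at hx
        simp only [boxcl, Finset.mem_union, Finset.mem_insert] at hx ⊢
        tauto
      · rcases Finset.mem_union.1 h with h | h
        · refine (clF_trans χ α h).trans ?_
          intro x hx
          simp only [boxcl, Finset.mem_union, Finset.mem_insert]
          tauto
        · refine (boxcl_trans e (.imp χ ψ) α h).trans ?_
          intro x hx
          rw [clF] at hx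
          simp only [boxcl, Finset.mem_union, Finset.mem_insert] at hx ⊢
          tauto
termination_by e ψ => sizeOf e
decreasing_by all_goals simp <;> omega
end
end Closure

end PDLaux

namespace PDLaux

section ClosureFacts

variable {A P : Type} [DecidableEq (MFml A P)] {φ : MFml A P}

theorem cl_imp1 {a b : MFml A P} (h : MFml.imp a b ∈ clF φ) : a ∈ clF φ := by
  refine clF_trans φ _ h ?_
  rw [clF]
  exact Finset.mem_insert_of_mem (Finset.mem_union_left _ (clF_self a))

theorem cl_imp2 {a b : MFml A P} (h : MFml.imp a b ∈ clF φ) : b ∈ clF φ := by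
  refine clF_trans φ _ h ?_
  rw [clF]
  exact Finset.mem_insert_of_mem (Finset.mem_union_right _ (clF_self b))

theorem cl_tgt {e : MTrm A P} {ψ : MFml A P} (h : MFml.box e ψ ∈ clF φ) : ψ ∈ clF φ := by
  refine clF_trans φ _ h ?_
  rw [clF]
  exact Finset.mem_union_right _ (clF_self ψ)

theorem cl_comp1 {e f : MTrm A P} {ψ : MFml A P} (h : MFml.box (.comp e f) ψ ∈ clF φ) :
    MFml.box e (MFml.box f ψ) ∈ clF φ := by
  refine clF_trans φ _ h ?_
  rw [clF, boxcl]
  exact Finset.mem_union_left _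
    (Finset.mem_insert_of_mem (Finset.mem_union_left _ (boxcl_self e _)))

theorem cl_comp2 {e f : MTrm A P} {ψ : MFml A P} (h : MFml.box (.comp e f) ψ ∈ clF φ) :
    MFml.box f ψ ∈ clF φ := by
  refine clF_trans φ _ h ?_
  rw [clF, boxcl]
  exact Finset.mem_union_left _
    (Finset.mem_insert_of_mem (Finset.mem_union_right _ (boxcl_self f _)))

theorem cl_union1 {e f : MTrm A P} {ψ : MFml A P} (h : MFml.box (.union e f) ψ ∈ clF φ) :
    MFml.box e ψ ∈ clF φ := by
  refine clF_trans φ _ h ?_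
  rw [clF, boxcl]
  exact Finset.mem_union_left _
    (Finset.mem_insert_of_mem (Finset.mem_union_left _ (boxcl_self e _)))

theorem cl_union2 {e f : MTrm A P} {ψ : MFml A P} (h : MFml.box (.union e f) ψ ∈ clF φ) :
    MFml.box f ψ ∈ clF φ := by
  refine clF_trans φ _ h ?_
  rw [clF, boxcl]
  exact Finset.mem_union_left _
    (Finset.mem_insert_of_mem (Finset.mem_union_right _ (boxcl_self f _)))

theorem cl_plus1 {e : MTrm A P} {ψ : MFml A P} (h : MFml.box (.plus e) ψ ∈ clF φ) :
    MFml.box e ψ ∈ clF φ := by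
  refine clF_trans φ _ h ?_
  rw [clF, boxcl]
  exact Finset.mem_union_left _
    (Finset.mem_insert_of_mem (Finset.mem_union_left _ (boxcl_self e _)))

theorem cl_plus2 {e : MTrm A P} {ψ : MFml A P} (h : MFml.box (.plus e) ψ ∈ clF φ) :
    MFml.box e (MFml.box (.plus e) ψ) ∈ clF φ := by
  refine clF_trans φ _ h ?_
  rw [clF, boxcl]
  exact Finset.mem_union_left _
    (Finset.mem_insert_of_mem (Finset.mem_union_right _ (boxcl_self e _)))

theorem cl_testL1 {χ : MFml A P} {e : MTrm A P} {ψ : MFml A P}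
    (h : MFml.box (.testL χ e) ψ ∈ clF φ) : χ ∈ clF φ := by
  refine clF_trans φ _ h ?_
  rw [clF, boxcl]
  exact Finset.mem_union_left _
    (Finset.mem_insert_of_mem (Finset.mem_union_left _ (clF_self χ)))

theorem cl_testL2 {χ : MFml A P} {e : MTrm A P} {ψ : MFml A P}
    (h : MFml.box (.testL χ e) ψ ∈ clF φ) : MFml.box e ψ ∈ clF φ := by
  refine clF_trans φ _ h ?_
  rw [clF, boxcl]
  exact Finset.mem_union_left _
    (Finset.mem_insert_of_mem (Finset.mem_union_right _ (boxcl_self e _)))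

theorem cl_testR1 {χ : MFml A P} {e : MTrm A P} {ψ : MFml A P}
    (h : MFml.box (.testR e χ) ψ ∈ clF φ) : MFml.box e (MFml.imp χ ψ) ∈ clF φ := by
  refine clF_trans φ _ h ?_
  rw [clF, boxcl]
  exact Finset.mem_union_left _ (Finset.mem_insert_of_mem
    (Finset.mem_insert_of_mem (Finset.mem_union_right _ (boxcl_self e _))))

end ClosureFacts

end PDLaux

namespace PDLaux

section Canon

open Classical

variable {A P : Type}

mutual
/-- Term variables occurring in a formula. -/
def varsF : MFml A P → List A
  | .pv _ => []
  | .imp a b => varsF a ++ varsF b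
  | .fls => []
  | .box e ψ => varsT e ++ varsF ψ
/-- Term variables occurring in a term. -/
def varsT : MTrm A P → List A
  | .tv a => [a]
  | .comp e f => varsT e ++ varsT f
  | .union e f => varsT e ++ varsT f
  | .plus e => varsT e
  | .testL χ e => varsF χ ++ varsT e
  | .testR e χ => varsT e ++ varsF χ
end

/-- `bigE a l` is the union of the atomic programs `a :: l`. -/
def bigE : A → List A → MTrm A P
  | a, [] => .tv a
  | a, b :: l => .union (.tv a) (bigE b l)

theorem bigE_proj {χ : MFml A P} : ∀ (a : A) (l : List A) (b : A), b ∈ a :: l →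
    MProof ((MFml.box (bigE a l) χ).imp (MFml.box (.tv b) χ))
  | a, [], b => by
    intro hb
    simp only [List.mem_singleton] at hb
    subst hb
    exact pId _
  | a, c :: l, b => by
    intro hb
    rcases List.mem_cons.1 hb with h | h
    · subst h
      exact unionE1 _ _ _
    · exact pTrans (unionE2 _ _ _) (bigE_proj c l b h)

variable [DecidableEq (MFml A P)]
variable (φ0 : MFml A P)

/-- base closure -/
noncomputable def Γ0 : Finset (MFml A P) := clF φ0

/-- the list of all term variables occurring in the closure -/
noncomputable def varL : List A := (Γ0 φ0).toList.flatMap varsF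

theorem mem_varL {a : A} {χ : MFml A P} (h : MFml.box (.tv a) χ ∈ Γ0 φ0) :
    a ∈ varL φ0 := by
  unfold varL
  rw [List.mem_flatMap]
  exact ⟨_, (by rwa [Finset.mem_toList]), by simp [varsF, varsT]⟩

/-- the canonical "ξ" formula used for Löb-style witnesses -/
noncomputable def xiF (ψ : MFml A P) (X : Finset (MFml A P)) : MFml A P :=
  MFml.and ψ.neg (conjL X.toList)

/-- the extra `[E⁺]`-formulas added to the closure -/
noncomputable def extras (E : MTrm A P) : Finset (MFml A P) :=
  ((Γ0 φ0).powerset ×ˢ (Γ0 φ0)).image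
    (fun q => MFml.box (.plus E) (xiF q.2 q.1).neg)

/-- extras determined by the variable list -/
noncomputable def extrasPart : List A → Finset (MFml A P)
  | [] => ∅
  | a :: l => extras φ0 (bigE a l)

/-- the extended closure -/
noncomputable def Γ3 : Finset (MFml A P) := Γ0 φ0 ∪ extrasPart φ0 (varL (A := A) φ0)

theorem Γ0_sub_Γ3 : Γ0 φ0 ⊆ Γ3 φ0 := Finset.subset_union_left

theorem extrasPart_shape : ∀ (l : List A), ∀ x ∈ extrasPart φ0 l,
    ∃ (E : MTrm A P) (y : MFml A P), x = MFml.box (.plus E) y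
  | [] => by intro x hx; simp [extrasPart] at hx
  | a :: l => by
    intro x hx
    unfold extrasPart extras at hx
    obtain ⟨q, _, hq⟩ := Finset.mem_image.1 hx
    exact ⟨bigE a l, (xiF q.2 q.1).neg, hq.symm⟩

theorem mem_Γ0_of_tvbox {a : A} {χ : MFml A P} (h : MFml.box (.tv a) χ ∈ Γ3 φ0) :
    MFml.box (.tv a) χ ∈ Γ0 φ0 := by
  rcases Finset.mem_union.1 h with h | h
  · exact h
  · obtain ⟨E, y, hq⟩ := extrasPart_shape φ0 _ _ h
    cases hq

/-- literal conjunction describing an atom -/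
noncomputable def AtomC (s : Finset (MFml A P)) : MFml A P := litConj (Γ3 φ0).toList s

/-- being an atom over the extended closure -/
def IsAtom (s : Finset (MFml A P)) : Prop := s ⊆ Γ3 φ0 ∧ Con (AtomC φ0 s)

theorem atomC_mem {s ξ} (hξ : ξ ∈ Γ3 φ0) (hs : ξ ∈ s) :
    MProof ((AtomC φ0 s).imp ξ) :=
  litConj_prv_mem (by rwa [Finset.mem_toList]) hs

theorem atomC_memneg {s ξ} (hξ : ξ ∈ Γ3 φ0) (hs : ξ ∉ s) :
    MProof ((AtomC φ0 s).imp ξ.neg) :=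
  litConj_prv_memneg (by rwa [Finset.mem_toList]) hs

theorem atom_mem_of_prv {s ξ} (hA : IsAtom φ0 s) (hξ : ξ ∈ Γ3 φ0)
    (h : MProof ((AtomC φ0 s).imp ξ)) : ξ ∈ s := by
  by_contra hc
  exact hA.2 (pNegE h (atomC_memneg φ0 hξ hc))

/-- An atom decides implications. -/
theorem atom_imp_iff {s a b} (hA : IsAtom φ0 s) (hi : MFml.imp a b ∈ Γ3 φ0)
    (ha : a ∈ Γ3 φ0) (hb : b ∈ Γ3 φ0) :
    (MFml.imp a b ∈ s ↔ (a ∈ s → b ∈ s)) := by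
  constructor
  · intro h has
    refine atom_mem_of_prv φ0 hA hb ?_
    exact pMP (atomC_mem φ0 hi h) (atomC_mem φ0 ha has)
  · intro h
    by_cases has : a ∈ s
    · refine atom_mem_of_prv φ0 hA hi ?_
      exact pTrans (atomC_mem φ0 hb (h has)) (tautInst (.imp (.pv b) (.imp (.pv a) (.pv b)))
        (fun v => by simp only [PropF.eval]; tauto))
    · refine atom_mem_of_prv φ0 hA hi ?_
      have hna := atomC_memneg φ0 ha has
      refine pTrans hna (tautInst (.imp (PropF.pneg (.pv a)) (.imp (.pv a) (.pv b)))
        (fun v => by simp only [PropF.eval, eval_pneg]; tauto))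

/-- `fls` is not in an atom. -/
theorem atom_not_fls {s} (hA : IsAtom φ0 s) : (MFml.fls : MFml A P) ∉ s := by
  intro hc
  have h1 : MProof ((AtomC φ0 s).imp .fls) := atomC_mem φ0 (hA.1 hc) hc
  exact hA.2 h1

end Canon

end PDLaux

namespace PDLaux

section Witness

open Classical

variable {A P : Type} [DecidableEq (MFml A P)]
variable (φ0 : MFml A P)

/-- number of `[E⁺]`-formulas in a set -/
noncomputable def keyE (E : MTrm A P) (s : Finset (MFml A P)) : ℕ :=
  (s.filter (fun x => ∃ y, x = MFml.box (.plus E) y)).card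

/-- the rank of an atom -/
noncomputable def keyL : List A → Finset (MFml A P) → ℕ
  | [], _ => 0
  | a :: l, s => keyE (bigE a l) s

/-- the rank of an atom, relative to the closure of `φ0` -/
noncomputable def key (s : Finset (MFml A P)) : ℕ := keyL (varL φ0) s

/-- Main witness existence lemma (using Löb's axiom). -/
theorem witness {u : Finset (MFml A P)} {a : A} {ψ : MFml A P}
    (hA : IsAtom φ0 u) (hbox : MFml.box (.tv a) ψ ∈ Γ0 φ0)
    (hnot : MFml.box (.tv a) ψ ∉ u) :
    ∃ t, IsAtom φ0 t ∧ key φ0 u < key φ0 t ∧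
      (∀ χ, MFml.box (.tv a) χ ∈ Γ3 φ0 → MFml.box (.tv a) χ ∈ u → χ ∈ t) ∧ ψ ∉ t := by
  have haL : a ∈ varL φ0 := mem_varL φ0 hbox
  rcases hE : varL (A := A) φ0 with _ | ⟨a0, l0⟩
  · rw [hE] at haL; cases haL
  rw [hE] at haL
  set E : MTrm A P := bigE a0 l0 with hEdef
  have hΓ3 : Γ3 φ0 = Γ0 φ0 ∪ extras φ0 E := by
    rw [Γ3, hE]; rfl
  have hkey : ∀ s, key φ0 s = keyE E s := by
    intro s; rw [key, hE]; rfl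
  have hψΓ0 : ψ ∈ Γ0 φ0 := cl_tgt hbox
  set g := AtomC φ0 u with hg
  set X : Finset (MFml A P) := (Γ0 φ0).filter (fun χ => MFml.box (.tv a) χ ∈ u) with hX
  set c : MFml A P := conjL X.toList with hc
  set ξf : MFml A P := xiF ψ X with hξf
  have hξfc : ξf = MFml.and ψ.neg c := rfl
  set newF : MFml A P := MFml.box (.plus E) ξf.neg with hnewF
  have hnewΓ3 : newF ∈ Γ3 φ0 := by
    rw [hΓ3]
    refine Finset.mem_union_right _ ?_
    rw [extras, Finset.mem_image]
    refine ⟨(X, ψ), ?_, rfl⟩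
    rw [Finset.mem_product]
    exact ⟨Finset.mem_powerset.2 (Finset.filter_subset _ _), hψΓ0⟩
  -- h1 : g proves ¬[a]ψ
  have h1 : MProof (g.imp (MFml.box (.tv a) ψ).neg) :=
    atomC_memneg φ0 (Γ0_sub_Γ3 φ0 hbox) hnot
  -- h2b : g proves [a]c
  have h2b : MProof (g.imp (MFml.box (.tv a) c)) := by
    refine pBoxConjL (fun χ hχ => ?_)
    have hχX : χ ∈ X := by rwa [← Finset.mem_toList]
    have hχu : MFml.box (.tv a) χ ∈ u := (Finset.mem_filter.1 hχX).2
    exact atomC_mem φ0 (hA.1 hχu) hχu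
  -- h3 : g proves ⟨a⟩ξf
  have h3 : MProof (g.imp (MFml.box (.tv a) ξf.neg).neg) := by
    have tq : MProof ((ξf.neg).imp (c.imp ψ)) := by
      rw [hξfc]
      exact tautInst (.imp (PropF.pneg (PropF.pand (PropF.pneg (.pv ψ)) (.pv c)))
          (.imp (.pv c) (.pv ψ)))
        (fun v => by simp only [PropF.eval, eval_pneg, eval_pand]; tauto)
    have tt : MProof ((MFml.box (.tv a) ξf.neg).imp
        ((MFml.box (.tv a) c).imp (MFml.box (.tv a) ψ))) :=
      pTrans (reg _ tq) (MProof.kAx _ _ _)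
    have tc : MProof (((MFml.box (.tv a) ξf.neg).imp
        ((MFml.box (.tv a) c).imp (MFml.box (.tv a) ψ))).imp
        ((g.imp (MFml.box (.tv a) ψ).neg).imp ((g.imp (MFml.box (.tv a) c)).imp
          (g.imp (MFml.box (.tv a) ξf.neg).neg)))) :=
      tautInst (.imp (.imp (.pv (MFml.box (.tv a) ξf.neg))
          (.imp (.pv (MFml.box (.tv a) c)) (.pv (MFml.box (.tv a) ψ))))
        (.imp (.imp (.pv g) (PropF.pneg (.pv (MFml.box (.tv a) ψ))))
          (.imp (.imp (.pv g) (.pv (MFml.box (.tv a) c)))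
            (.imp (.pv g) (PropF.pneg (.pv (MFml.box (.tv a) ξf.neg)))))))
        (fun v => by simp only [PropF.eval, eval_pneg]; tauto)
    exact h2b.mp (h1.mp (tt.mp tc))
  -- hd : g proves ⟨E⁺⟩ξf
  have h4 : MProof ((MFml.dia (.tv a) ξf).imp (MFml.dia E ξf)) :=
    contrap (bigE_proj a0 l0 a haL)
  have hd : MProof (g.imp (MFml.dia (.plus E) ξf)) :=
    pTrans (pTrans h3 h4) (diaPlusOfDia E ξf)
  -- newF ∉ u
  have hnewNotu : newF ∉ u := by
    intro hmem
    have h8 : MProof (g.imp (MFml.box (.tv a) ξf.neg)) := by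
      refine pTrans (atomC_mem φ0 hnewΓ3 hmem) ?_
      exact pTrans (plusUnfold1 E ξf.neg) (bigE_proj a0 l0 a haL)
    exact hA.2 (pNegE h8 h3)
  -- hd2 : g proves ⟨E⁺⟩(ξf ∧ newF)
  have hd2 : MProof (g.imp (MFml.dia (.plus E) (MFml.and ξf newF))) :=
    pTrans hd (loebDia E ξf)
  -- the [E⁺]-formulas of u
  set Du : Finset (MFml A P) :=
    u.filter (fun x => ∃ y, x = MFml.box (.plus E) y) with hDu
  have h7b : MProof (g.imp (MFml.box (.plus E) (conjL Du.toList))) := by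
    refine pBoxConjL (fun η hη => ?_)
    have hηD : η ∈ Du := by rwa [← Finset.mem_toList]
    obtain ⟨hηu, y, hy⟩ := Finset.mem_filter.1 hηD
    have hη3 : MProof (g.imp η) := atomC_mem φ0 (hA.1 hηu) hηu
    subst hy
    exact pTrans hη3 (plusTrans E y)
  set δ0 : MFml A P := MFml.and (MFml.and ξf newF) (conjL Du.toList) with hδ0
  have hd3 : MProof (g.imp (MFml.dia (.plus E) δ0)) := pDiaBoxAnd hd2 h7b
  -- start Lindenbaum
  have hstart : Con (MFml.and g (MFml.dia (.plus E) δ0)) :=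
    conMono (pAndI (pId g) hd3) hA.2
  obtain ⟨t, hts, hcont⟩ := lind (MFml.dia (.plus E)) g (hM_dia _) (hOr_dia _)
    (Γ3 φ0).toList (Finset.nodup_toList _) δ0 hstart
  have htsub : t ⊆ Γ3 φ0 := by
    intro x hx
    have h' := hts x hx
    rwa [Finset.mem_toList] at h'
  -- consistency facts
  have hcy : Con (MFml.and δ0 (AtomC φ0 t)) := by
    have := lindCon (MFml.dia (.plus E)) g (hBot_dia _) hcont
    exact this
  have hconT : Con (AtomC φ0 t) := conMono (pAndE2 _ _) hcy
  have hAt : IsAtom φ0 t := ⟨htsub, hconT⟩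
  -- membership extraction
  have memT : ∀ θ, θ ∈ Γ3 φ0 → MProof (δ0.imp θ) → θ ∈ t := by
    intro θ hθ hprv
    by_contra hcn
    refine hcy (pNegE (a := θ) ?_ ?_)
    · exact pTrans (pAndE1 _ _) hprv
    · exact pTrans (pAndE2 _ _) (atomC_memneg φ0 hθ hcn)
  have notMemT : ∀ θ, θ ∈ Γ3 φ0 → MProof (δ0.imp θ.neg) → θ ∉ t := by
    intro θ hθ hprv hcn
    refine hcy (pNegE (a := θ) ?_ ?_)
    · exact pTrans (pAndE2 _ _) (atomC_mem φ0 hθ hcn)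
    · exact pTrans (pAndE1 _ _) hprv
  have hδξ : MProof (δ0.imp ξf) := pTrans (pAndE1 _ _) (pAndE1 _ _)
  have hψnotT : ψ ∉ t := by
    refine notMemT ψ (Γ0_sub_Γ3 φ0 hψΓ0) ?_
    exact pTrans hδξ (by rw [hξfc]; exact pAndE1 _ _)
  have hnewT : newF ∈ t :=
    memT newF hnewΓ3 (pTrans (pAndE1 _ _) (pAndE2 _ _))
  have hDuT : ∀ η ∈ Du, η ∈ t := by
    intro η hη
    refine memT η (hA.1 (Finset.mem_filter.1 hη).1) ?_
    refine pTrans (pAndE2 _ _) (conjL_mem ?_)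
    rwa [Finset.mem_toList]
  have hXT : ∀ χ ∈ X, χ ∈ t := by
    intro χ hχ
    refine memT χ (Γ0_sub_Γ3 φ0 (Finset.mem_filter.1 hχ).1) ?_
    refine pTrans (pTrans hδξ (by rw [hξfc]; exact pAndE2 _ _)) (conjL_mem ?_)
    rwa [Finset.mem_toList]
  refine ⟨t, hAt, ?_, ?_, hψnotT⟩
  · -- key increases
    rw [hkey, hkey]
    refine Finset.card_lt_card ?_
    rw [Finset.ssubset_iff_of_subset]
    · exact ⟨newF, Finset.mem_filter.2 ⟨hnewT, ξf.neg, rfl⟩,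
        fun hc => hnewNotu (Finset.mem_filter.1 hc).1⟩
    · intro x hx
      obtain ⟨hxu, y, hy⟩ := Finset.mem_filter.1 hx
      exact Finset.mem_filter.2 ⟨hDuT x (Finset.mem_filter.2 ⟨hxu, y, hy⟩), y, hy⟩
  · -- box transfer
    intro χ hχ3 hχu
    have hχ0 : MFml.box (.tv a) χ ∈ Γ0 φ0 := mem_Γ0_of_tvbox φ0 hχ3
    exact hXT χ (Finset.mem_filter.2 ⟨cl_tgt hχ0, hχu⟩)

end Witness

end PDLaux

namespace PDLaux

section Model

open Classical

variable {A P : Type} [DecidableEq (MFml A P)]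
variable (φ0 : MFml A P)

/-- all atoms, as a finite set -/
noncomputable def atomsFinset : Finset (Finset (MFml A P)) :=
  (Γ3 φ0).powerset.filter (IsAtom φ0)

theorem mem_atomsFinset {s : Finset (MFml A P)} :
    s ∈ atomsFinset φ0 ↔ IsAtom φ0 s := by
  rw [atomsFinset, Finset.mem_filter, Finset.mem_powerset]
  exact ⟨fun h => h.2, fun h => ⟨h.1, h⟩⟩

/-- the worlds of the canonical model -/
def AW : Type := {s : Finset (MFml A P) // s ∈ atomsFinset φ0}

noncomputable instance : Fintype (AW φ0) := by
  unfold AW; infer_instance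

theorem AW_atom (w : AW φ0) : IsAtom φ0 w.val := (mem_atomsFinset φ0).1 w.2

/-- numbering of worlds -/
noncomputable def νW (w : AW φ0) : ℕ := (Fintype.equivFin (AW φ0) w : Fin _)

theorem νW_lt (w : AW φ0) : νW φ0 w < Fintype.card (AW φ0) :=
  (Fintype.equivFin (AW φ0) w).isLt

theorem νW_inj {w w' : AW φ0} (h : νW φ0 w = νW φ0 w') : w = w' := by
  have := Fin.val_injective h
  exact (Fintype.equivFin (AW φ0)).injective this

/-- linear position of a world -/
noncomputable def μW (w : AW φ0) : ℕ :=
  key φ0 w.val * (Fintype.card (AW φ0) + 1) + νW φ0 w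

theorem μW_lt_of_key {w w' : AW φ0} (h : key φ0 w.val < key φ0 w'.val) :
    μW φ0 w < μW φ0 w' := by
  unfold μW
  have h1 := νW_lt φ0 w
  have h2 := νW_lt φ0 w'
  nlinarith

theorem μW_inj {w w' : AW φ0} (h : μW φ0 w = μW φ0 w') : w = w' := by
  unfold μW at h
  have h1 := νW_lt φ0 w
  have h2 := νW_lt φ0 w'
  have hk : key φ0 w.val = key φ0 w'.val := by nlinarith
  rw [hk] at h
  have : νW φ0 w = νW φ0 w' := by omega
  exact νW_inj φ0 this

theorem μW_bound (w : AW φ0) :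
    μW φ0 w ≤ (Γ3 φ0).card * (Fintype.card (AW φ0) + 1) + Fintype.card (AW φ0) := by
  unfold μW
  have h1 : key φ0 w.val ≤ (Γ3 φ0).card := by
    rw [key]
    rcases hV : varL (A := A) φ0 with _ | ⟨a, l⟩
    · simp [keyL]
    · rw [keyL, keyE]
      refine le_trans (Finset.card_le_card (Finset.filter_subset _ _)) ?_
      exact Finset.card_le_card (AW_atom φ0 w).1
  have h2 := νW_lt φ0 w
  nlinarith

/-- the canonical structure -/
noncomputable def Smod : GStruct A P (AW φ0) where
  U u t := μW φ0 u < μW φ0 t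
  rel a u t := μW φ0 u < μW φ0 t ∧
    ∀ χ, MFml.box (.tv a) χ ∈ Γ3 φ0 → MFml.box (.tv a) χ ∈ u.val → χ ∈ t.val
  rel_sub a x y h := h.1
  val p w := MFml.pv p ∈ w.val

theorem msemT_mono : ∀ (e : MTrm A P) (u t : AW φ0),
    msemT (Smod φ0) e u t → μW φ0 u < μW φ0 t
  | .tv a, u, t => fun h => h.1
  | .comp e f, u, t => by
    intro h
    rw [msemT] at h
    obtain ⟨m, h1, h2⟩ := h
    exact lt_trans (msemT_mono e u m h1) (msemT_mono f m t h2)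
  | .union e f, u, t => by
    intro h
    rw [msemT] at h
    rcases h with h | h
    · exact msemT_mono e u t h
    · exact msemT_mono f u t h
  | .plus e, u, t => by
    intro h
    rw [msemT] at h
    induction h with
    | single h => exact msemT_mono e _ _ h
    | tail _ h2 ih => exact lt_trans ih (msemT_mono e _ _ h2)
  | .testL χ e, u, t => by
    intro h
    rw [msemT] at h
    exact msemT_mono e u t h.2
  | .testR e χ, u, t => by
    intro h
    rw [msemT] at h
    exact msemT_mono e u t h.1

/-- membership modus ponens inside an atom -/
theorem atom_mp {u : AW φ0} {ξ η : MFml A P} (hξ3 : ξ ∈ Γ3 φ0) (hξ : ξ ∈ u.val)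
    (hη : η ∈ Γ3 φ0) (h : MProof (ξ.imp η)) : η ∈ u.val :=
  atom_mem_of_prv φ0 (AW_atom φ0 u) hη (pTrans (atomC_mem φ0 hξ3 hξ) h)

end Model

end PDLaux

namespace PDLaux

section Truth

open Classical

variable {A P : Type} [DecidableEq (MFml A P)]
variable (φ0 : MFml A P)

/-- bound on `μW` -/
noncomputable def BB : ℕ :=
  (Γ3 φ0).card * (Fintype.card (AW φ0) + 1) + Fintype.card (AW φ0)

theorem μW_le_BB (w : AW φ0) : μW φ0 w ≤ BB φ0 := μW_bound φ0 w

mutual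

theorem tlF : ∀ (ξ : MFml A P), ξ ∈ Γ0 φ0 → ∀ u : AW φ0,
    (ξ ∈ u.val ↔ msemF (Smod φ0) ξ u)
  | .pv p => by
    intro hξ u
    simp only [msemF, Smod]
  | .fls => by
    intro hξ u
    simp only [msemF]
    constructor
    · intro h; exact atom_not_fls φ0 (AW_atom φ0 u) h
    · intro h; cases h
  | .imp a b => by
    intro hξ u
    have ha := cl_imp1 hξ
    have hb := cl_imp2 hξ
    have h := atom_imp_iff φ0 (AW_atom φ0 u) (Γ0_sub_Γ3 φ0 hξ)
      (Γ0_sub_Γ3 φ0 ha) (Γ0_sub_Γ3 φ0 hb)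
    simp only [msemF]
    rw [h, tlF a ha u, tlF b hb u]
  | .box e ψ => by
    intro hξ u
    have hψ0 := cl_tgt hξ
    simp only [msemF]
    constructor
    · intro h t ht
      exact (tlF ψ hψ0 t).1 (tlBox e ψ hξ u t h ht)
    · intro h
      by_contra hn
      obtain ⟨t, hst, hψt⟩ := tlDia e ψ hξ u hn
      exact hψt ((tlF ψ hψ0 t).2 (h t hst))
termination_by ξ => (sizeOf ξ, 0)
decreasing_by all_goals (apply Prod.Lex.left; simp <;> omega)

theorem tlBox : ∀ (e : MTrm A P) (ψ : MFml A P), MFml.box e ψ ∈ Γ0 φ0 →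
    ∀ u t : AW φ0, MFml.box e ψ ∈ u.val → msemT (Smod φ0) e u t → ψ ∈ t.val
  | .tv a => by
    intro ψ hξ u t hmem hsem
    rw [msemT] at hsem
    exact hsem.2 ψ (Γ0_sub_Γ3 φ0 hξ) hmem
  | .comp e f => by
    intro ψ hξ u t hmem hsem
    have h1 := cl_comp1 hξ
    have h2 := cl_comp2 hξ
    have hmem' : MFml.box e (MFml.box f ψ) ∈ u.val :=
      atom_mp φ0 (Γ0_sub_Γ3 φ0 hξ) hmem (Γ0_sub_Γ3 φ0 h1) (iffE1 (MProof.compAx e f ψ))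
    rw [msemT] at hsem
    obtain ⟨m, hs1, hs2⟩ := hsem
    exact tlBox f ψ h2 m t (tlBox e (MFml.box f ψ) h1 u m hmem' hs1) hs2
  | .union e f => by
    intro ψ hξ u t hmem hsem
    rw [msemT] at hsem
    rcases hsem with hs | hs
    · have h1 := cl_union1 hξ
      have hmem' : MFml.box e ψ ∈ u.val :=
        atom_mp φ0 (Γ0_sub_Γ3 φ0 hξ) hmem (Γ0_sub_Γ3 φ0 h1) (unionE1 e f ψ)
      exact tlBox e ψ h1 u t hmem' hs
    · have h1 := cl_union2 hξ
      have hmem' : MFml.box f ψ ∈ u.val :=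
        atom_mp φ0 (Γ0_sub_Γ3 φ0 hξ) hmem (Γ0_sub_Γ3 φ0 h1) (unionE2 e f ψ)
      exact tlBox f ψ h1 u t hmem' hs
  | .plus e => by
    intro ψ hξ u t hmem hsem
    have h1 := cl_plus1 hξ
    have h2 := cl_plus2 hξ
    have hstep : ∀ x y : AW φ0, MFml.box (.plus e) ψ ∈ x.val → msemT (Smod φ0) e x y →
        ψ ∈ y.val ∧ MFml.box (.plus e) ψ ∈ y.val := by
      intro x y hx hsxy
      have m1 : MFml.box e ψ ∈ x.val :=
        atom_mp φ0 (Γ0_sub_Γ3 φ0 hξ) hx (Γ0_sub_Γ3 φ0 h1) (plusUnfold1 e ψ)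
      have m2 : MFml.box e (MFml.box (.plus e) ψ) ∈ x.val :=
        atom_mp φ0 (Γ0_sub_Γ3 φ0 hξ) hx (Γ0_sub_Γ3 φ0 h2) (plusUnfold2 e ψ)
      exact ⟨tlBox e ψ h1 x y m1 hsxy, tlBox e (MFml.box (.plus e) ψ) h2 x y m2 hsxy⟩
    rw [msemT] at hsem
    have aux : ψ ∈ t.val ∧ MFml.box (.plus e) ψ ∈ t.val := by
      induction hsem with
      | single h => exact hstep _ _ hmem h
      | tail _ h2' ih => exact hstep _ _ ih.2 h2'
    exact aux.1
  | .testL χ e => by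
    intro ψ hξ u t hmem hsem
    rw [msemT] at hsem
    obtain ⟨hχu, hst⟩ := hsem
    have hχ0 := cl_testL1 hξ
    have hbe := cl_testL2 hξ
    have hχmem : χ ∈ u.val := (tlF χ hχ0 u).2 hχu
    have hmem' : MFml.box e ψ ∈ u.val := by
      refine atom_mem_of_prv φ0 (AW_atom φ0 u) (Γ0_sub_Γ3 φ0 hbe) ?_
      refine pMP (pTrans (atomC_mem φ0 (Γ0_sub_Γ3 φ0 hξ) hmem)
        (iffE1 (MProof.testLAx χ e ψ))) (atomC_mem φ0 (Γ0_sub_Γ3 φ0 hχ0) hχmem)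
    exact tlBox e ψ hbe u t hmem' hst
  | .testR e χ => by
    intro ψ hξ u t hmem hsem
    rw [msemT] at hsem
    obtain ⟨hst, hχt⟩ := hsem
    have h1 := cl_testR1 hξ
    have himp0 : MFml.imp χ ψ ∈ Γ0 φ0 := cl_tgt h1
    have hχ0 := cl_imp1 himp0
    have hψ0 := cl_imp2 himp0
    have hmem' : MFml.box e (MFml.imp χ ψ) ∈ u.val :=
      atom_mp φ0 (Γ0_sub_Γ3 φ0 hξ) hmem (Γ0_sub_Γ3 φ0 h1) (iffE1 (MProof.testRAx e χ ψ))
    have himpT : MFml.imp χ ψ ∈ t.val := tlBox e (MFml.imp χ ψ) h1 u t hmem' hst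
    have hχT : χ ∈ t.val := (tlF χ hχ0 t).2 hχt
    exact (atom_imp_iff φ0 (AW_atom φ0 t) (Γ0_sub_Γ3 φ0 himp0) (Γ0_sub_Γ3 φ0 hχ0)
      (Γ0_sub_Γ3 φ0 hψ0)).1 himpT hχT
termination_by e => (sizeOf e, 0)
decreasing_by all_goals (apply Prod.Lex.left; simp <;> omega)

theorem tlDia : ∀ (e : MTrm A P) (ψ : MFml A P), MFml.box e ψ ∈ Γ0 φ0 →
    ∀ u : AW φ0, MFml.box e ψ ∉ u.val →
      ∃ t : AW φ0, msemT (Smod φ0) e u t ∧ ψ ∉ t.val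
  | .tv a, ψ, hξ, u, hn => by
    obtain ⟨t, hAt, hk, hT, hψ⟩ := witness φ0 (AW_atom φ0 u) hξ hn
    refine ⟨⟨t, (mem_atomsFinset φ0).2 hAt⟩, ?_, hψ⟩
    simp only [msemT]
    exact ⟨μW_lt_of_key φ0 hk, hT⟩
  | .comp e f, ψ, hξ, u, hn => by
    have h1 := cl_comp1 hξ
    have h2 := cl_comp2 hξ
    have hn' : MFml.box e (MFml.box f ψ) ∉ u.val := by
      intro hc
      exact hn (atom_mp φ0 (Γ0_sub_Γ3 φ0 h1) hc (Γ0_sub_Γ3 φ0 hξ)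
        (iffE2 (MProof.compAx e f ψ)))
    obtain ⟨m, hs1, hn2⟩ := tlDia e (MFml.box f ψ) h1 u hn'
    obtain ⟨t, hs2, hψ⟩ := tlDia f ψ h2 m hn2
    refine ⟨t, ?_, hψ⟩
    rw [msemT]
    exact ⟨m, hs1, hs2⟩
  | .union e f, ψ, hξ, u, hn => by
    have h1 := cl_union1 hξ
    have h2 := cl_union2 hξ
    by_cases hbe : MFml.box e ψ ∈ u.val
    · have hbf : MFml.box f ψ ∉ u.val := by
        intro hc
        refine hn (atom_mem_of_prv φ0 (AW_atom φ0 u) (Γ0_sub_Γ3 φ0 hξ) ?_)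
        exact pTrans (pAndI (atomC_mem φ0 (Γ0_sub_Γ3 φ0 h1) hbe)
          (atomC_mem φ0 (Γ0_sub_Γ3 φ0 h2) hc)) (unionI e f ψ)
      obtain ⟨t, hs, hψ⟩ := tlDia f ψ h2 u hbf
      refine ⟨t, ?_, hψ⟩
      rw [msemT]
      exact Or.inr hs
    · obtain ⟨t, hs, hψ⟩ := tlDia e ψ h1 u hbe
      refine ⟨t, ?_, hψ⟩
      rw [msemT]
      exact Or.inl hs
  | .plus e, ψ, hξ, u, hn => by
    have h1 := cl_plus1 hξ
    have h2 := cl_plus2 hξ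
    by_cases hbe : MFml.box e ψ ∈ u.val
    · have hn2 : MFml.box e (MFml.box (.plus e) ψ) ∉ u.val := by
        intro hc
        refine hn (atom_mem_of_prv φ0 (AW_atom φ0 u) (Γ0_sub_Γ3 φ0 hξ) ?_)
        exact pTrans (pAndI (atomC_mem φ0 (Γ0_sub_Γ3 φ0 h1) hbe)
          (atomC_mem φ0 (Γ0_sub_Γ3 φ0 h2) hc)) (plusFold e ψ)
      obtain ⟨m, hs, hnm⟩ := tlDia e (MFml.box (.plus e) ψ) h2 u hn2
      have hμ : μW φ0 u < μW φ0 m := msemT_mono φ0 e u m hs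
      obtain ⟨t, hpath, hψ⟩ := tlDia (.plus e) ψ hξ m hnm
      refine ⟨t, ?_, hψ⟩
      rw [msemT] at hpath ⊢
      exact Relation.TransGen.head hs hpath
    · obtain ⟨t, hs, hψ⟩ := tlDia e ψ h1 u hbe
      refine ⟨t, ?_, hψ⟩
      rw [msemT]
      exact Relation.TransGen.single hs
  | .testL χ e, ψ, hξ, u, hn => by
    have hχ0 := cl_testL1 hξ
    have hbe := cl_testL2 hξ
    have hχu : χ ∈ u.val := by
      by_contra hc
      refine hn (atom_mem_of_prv φ0 (AW_atom φ0 u) (Γ0_sub_Γ3 φ0 hξ) ?_)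
      refine pTrans (atomC_memneg φ0 (Γ0_sub_Γ3 φ0 hχ0) hc) ?_
      refine pTrans ?_ (iffE2 (MProof.testLAx χ e ψ))
      exact tautInst (.imp (PropF.pneg (.pv χ)) (.imp (.pv χ) (.pv (MFml.box e ψ))))
        (fun v => by simp only [PropF.eval, eval_pneg]; tauto)
    have hbeu : MFml.box e ψ ∉ u.val := by
      intro hc
      refine hn (atom_mem_of_prv φ0 (AW_atom φ0 u) (Γ0_sub_Γ3 φ0 hξ) ?_)
      refine pTrans (atomC_mem φ0 (Γ0_sub_Γ3 φ0 hbe) hc) ?_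
      refine pTrans ?_ (iffE2 (MProof.testLAx χ e ψ))
      exact tautInst (.imp (.pv (MFml.box e ψ)) (.imp (.pv χ) (.pv (MFml.box e ψ))))
        (fun v => by simp only [PropF.eval]; tauto)
    obtain ⟨t, hs, hψ⟩ := tlDia e ψ hbe u hbeu
    refine ⟨t, ?_, hψ⟩
    rw [msemT]
    exact ⟨(tlF χ hχ0 u).1 hχu, hs⟩
  | .testR e χ, ψ, hξ, u, hn => by
    have h1 := cl_testR1 hξ
    have himp0 : MFml.imp χ ψ ∈ Γ0 φ0 := cl_tgt h1
    have hχ0 := cl_imp1 himp0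
    have hψ0 := cl_imp2 himp0
    have hn' : MFml.box e (MFml.imp χ ψ) ∉ u.val := by
      intro hc
      exact hn (atom_mp φ0 (Γ0_sub_Γ3 φ0 h1) hc (Γ0_sub_Γ3 φ0 hξ)
        (iffE2 (MProof.testRAx e χ ψ)))
    obtain ⟨t, hs, hnimp⟩ := tlDia e (MFml.imp χ ψ) h1 u hn'
    have himpIff := atom_imp_iff φ0 (AW_atom φ0 t) (Γ0_sub_Γ3 φ0 himp0)
      (Γ0_sub_Γ3 φ0 hχ0) (Γ0_sub_Γ3 φ0 hψ0)
    have hni : ¬ (χ ∈ t.val → ψ ∈ t.val) := fun hh => hnimp (himpIff.2 hh)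
    push_neg at hni
    refine ⟨t, ?_, hni.2⟩
    rw [msemT]
    exact ⟨hs, (tlF χ hχ0 t).1 hni.1⟩
termination_by e ψ hξ u hn => (sizeOf e, BB φ0 + 1 - μW φ0 u)
decreasing_by
  all_goals first
    | (apply Prod.Lex.left; simp <;> omega)
    | (apply Prod.Lex.right
       have := μW_le_BB φ0 m
       omega)

end

end Truth

end PDLaux

namespace PDLaux

section Sound

variable {A P : Type}

theorem semNeg {W : Type} (S : GStruct A P W) (a : MFml A P) (x : W) :
    msemF S a.neg x ↔ ¬ msemF S a x := by
  simp only [MFml.neg, msemF]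

theorem semAnd {W : Type} (S : GStruct A P W) (a b : MFml A P) (x : W) :
    msemF S (MFml.and a b) x ↔ (msemF S a x ∧ msemF S b x) := by
  simp only [MFml.and, MFml.or, MFml.neg, msemF]
  tauto

theorem semIff {W : Type} (S : GStruct A P W) (a b : MFml A P) (x : W) :
    msemF S (MFml.iff a b) x ↔ (msemF S a x ↔ msemF S b x) := by
  rw [MFml.iff, semAnd]
  simp only [msemF]
  tauto

theorem msemT_U {W : Type} (S : GStruct A P W)
    (htr : ∀ x y z, S.U x y → S.U y z → S.U x z) :
    ∀ (e : MTrm A P) (x y : W), msemT S e x y → S.U x y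
  | .tv a, x, y => fun h => S.rel_sub a x y h
  | .comp e f, x, y => by
    intro h
    rw [msemT] at h
    obtain ⟨m, h1, h2⟩ := h
    exact htr _ _ _ (msemT_U S htr e x m h1) (msemT_U S htr f m y h2)
  | .union e f, x, y => by
    intro h
    rw [msemT] at h
    rcases h with h | h
    · exact msemT_U S htr e x y h
    · exact msemT_U S htr f x y h
  | .plus e, x, y => by
    intro h
    rw [msemT] at h
    induction h with
    | single h => exact msemT_U S htr e _ _ h
    | tail _ h2 ih => exact htr _ _ _ ih (msemT_U S htr e _ _ h2)
  | .testL χ e, x, y => by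
    intro h
    rw [msemT] at h
    exact msemT_U S htr e x y h.2
  | .testR e χ, x, y => by
    intro h
    rw [msemT] at h
    exact msemT_U S htr e x y h.1

theorem eval_inst {W : Type} (S : GStruct A P W) {V : Type} (σ : V → MFml A P)
    (x : W) : ∀ (χ : PropF V),
    msemF S (PropF.inst σ χ) x ↔ PropF.eval (fun v => msemF S (σ v) x) χ
  | .pv p => by simp only [PropF.inst, PropF.eval]
  | .imp a b => by
    simp only [PropF.inst, PropF.eval, msemF]
    rw [eval_inst S σ x a, eval_inst S σ x b]
  | .fls => by simp only [PropF.inst, PropF.eval, msemF]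

theorem semImpI {W : Type} {S : GStruct A P W} {a b : MFml A P} {x : W}
    (h : msemF S a x → msemF S b x) : msemF S (a.imp b) x := by
  simp only [msemF]; exact h

theorem semIffI {W : Type} {S : GStruct A P W} {a b : MFml A P} {x : W}
    (h : msemF S a x ↔ msemF S b x) : msemF S (MFml.iff a b) x := (semIff S a b x).2 h

/-- Soundness of `H⁻` over `GRELsfinlin`. -/
theorem soundness {φ : MFml A P} (h : MProof φ) :
    ∀ (W : Type) (S : GStruct A P W), SFinLin S → ∀ x : W, msemF S φ x := by
  induction h with
  | @mp φ1 ψ1 h1 h2 ih1 ih2 =>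
    intro W S hS x
    have := ih2 W S hS x
    simp only [msemF] at this
    exact this (ih1 W S hS x)
  | @nec φ1 e h ih =>
    intro W S hS x
    simp only [msemF]
    intro y _
    exact ih W S hS y
  | prop χ hval σ =>
    intro W S hS x
    rw [eval_inst]
    exact hval _
  | compAx e f ψ =>
    intro W S hS x
    apply semIffI
    simp only [msemF, msemT]
    constructor
    · intro h m hm y hy
      exact h y ⟨m, hm, hy⟩
    · rintro h y ⟨m, hm, hy⟩
      exact h m hm y hy
  | unionAx e f ψ =>
    intro W S hS x
    apply semIffI
    rw [semAnd]
    simp only [msemF, msemT]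
    constructor
    · intro h
      exact ⟨fun y hy => h y (Or.inl hy), fun y hy => h y (Or.inr hy)⟩
    · rintro ⟨h1, h2⟩ y (hy | hy)
      · exact h1 y hy
      · exact h2 y hy
  | plusAx e ψ =>
    intro W S hS x
    apply semIffI
    rw [semAnd]
    simp only [msemF, msemT]
    constructor
    · intro h
      refine ⟨fun y hy => h y (Relation.TransGen.single hy), ?_⟩
      intro m hm y hy
      exact h y (Relation.TransGen.head hm hy)
    · rintro ⟨h1, h2⟩ y hy
      obtain ⟨m, hm, hmy⟩ := Relation.TransGen.head'_iff.1 hy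
      rcases Relation.reflTransGen_iff_eq_or_transGen.1 hmy with rfl | htg
      · exact h1 y hm
      · exact h2 m hm y htg
  | plusInd e ψ =>
    intro W S hS x
    apply semImpI
    intro hab
    rw [semAnd] at hab
    obtain ⟨h1, h2⟩ := hab
    simp only [msemF, msemT] at h1 h2 ⊢
    intro y hy
    induction hy with
    | single h => exact h1 _ h
    | @tail b z hxb hbz ih =>
      exact h2 b hxb ih z hbz
  | testLAx χ e ψ =>
    intro W S hS x
    apply semIffI
    simp only [msemF, msemT]
    constructor
    · intro h hχ y hy
      exact h y ⟨hχ, hy⟩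
    · rintro h y ⟨hχ, hy⟩
      exact h hχ y hy
  | testRAx e χ ψ =>
    intro W S hS x
    apply semIffI
    simp only [msemF, msemT]
    constructor
    · intro h y hy hχ
      exact h y ⟨hy, hχ⟩
    · rintro h y ⟨hy, hχ⟩
      exact h y hy hχ
  | kAx e ψ1 ψ2 =>
    intro W S hS x
    simp only [msemF]
    intro h1 h2 y hy
    exact h1 y hy (h2 y hy)
  | @loeb e ψ =>
    intro W S hS x
    obtain ⟨hne, hfin, hirr, htr, htot⟩ := hS
    apply semImpI
    intro hyp
    simp only [msemF, msemT] at hyp ⊢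
    have hwf : WellFounded (fun y z : W => S.U z y) := by
      have : IsTrans W (fun y z : W => S.U z y) := ⟨fun a b c h1 h2 => htr _ _ _ h2 h1⟩
      have : IsIrrefl W (fun y z : W => S.U z y) := ⟨fun a h => hirr a h⟩
      exact Finite.wellFounded_of_trans_of_irrefl _
    intro y hy
    induction y using WellFounded.induction hwf with
    | _ y ihy =>
      refine hyp y hy ?_
      intro z hz
      refine ihy z ?_ ?_
      · refine msemT_U S htr (.plus e) y z ?_
        rw [msemT]
        exact hz
      · exact Relation.TransGen.trans hy hz

end Sound

end PDLaux

theorem identity_free_pdl_completeness {A P : Type} (φ : MFml A P) :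
    (∀ (W : Type) (S : GStruct A P W), SFinLin S → ∀ x : W, msemF S φ x) ↔ MProof φ := by
  classical
  constructor
  · intro hval
    by_contra hnp
    -- ¬φ is consistent
    have hcon : PDLaux.Con (MFml.neg φ) := by
      intro hc
      exact hnp (hc.mp (PDLaux.dneThm φ))
    -- Lindenbaum: find an atom avoiding φ
    have hstart : PDLaux.Con (MFml.and (MFml.neg φ) (id (MFml.tru : MFml A P))) := by
      refine PDLaux.conMono ?_ hcon
      refine PDLaux.pAndI (PDLaux.pId _) (PDLaux.pI ?_)
      exact PDLaux.tautInst (PDLaux.PropF.pneg .fls)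
        (fun v => by simp [PropF.eval, PDLaux.eval_pneg])
    obtain ⟨s, hts, hcont⟩ := PDLaux.lind (id) (MFml.neg φ) PDLaux.hM_id PDLaux.hOr_id
      (PDLaux.Γ3 φ).toList (Finset.nodup_toList _) (MFml.tru) hstart
    have hsub : s ⊆ PDLaux.Γ3 φ := by
      intro x hx
      have h' := hts x hx
      rwa [Finset.mem_toList] at h'
    have hcy : PDLaux.Con (MFml.and (MFml.tru)
        (PDLaux.AtomC φ s)) := by
      have := PDLaux.lindCon (id) (MFml.neg φ) PDLaux.hBot_id hcont
      exact this
    have hconA : PDLaux.Con (PDLaux.AtomC φ s) :=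
      PDLaux.conMono (PDLaux.pAndE2 _ _) hcy
    have hAtom : PDLaux.IsAtom φ s := ⟨hsub, hconA⟩
    have hφΓ0 : φ ∈ PDLaux.Γ0 φ := PDLaux.clF_self φ
    have hφnot : φ ∉ s := by
      intro hmem
      have h1 : MProof ((PDLaux.AtomC φ s).imp φ) :=
        PDLaux.atomC_mem φ (PDLaux.Γ0_sub_Γ3 φ hφΓ0) hmem
      refine hcont (PDLaux.pNegE (a := φ) ?_ ?_)
      · exact PDLaux.pTrans (PDLaux.pAndE2 _ _)
          (PDLaux.pTrans (PDLaux.pAndE2 _ _) h1)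
      · exact PDLaux.pAndE1 _ _
    -- the canonical countermodel
    let w0 : PDLaux.AW φ := ⟨s, (PDLaux.mem_atomsFinset φ).2 hAtom⟩
    have hS : SFinLin (PDLaux.Smod φ) := by
      refine ⟨⟨w0⟩, Finite.of_fintype _, ?_, ?_, ?_⟩
      · intro x
        exact lt_irrefl _
      · intro x y z h1 h2
        exact lt_trans h1 h2
      · intro x y hne
        have hμ : PDLaux.μW φ x ≠ PDLaux.μW φ y :=
          fun h => hne (PDLaux.μW_inj φ h)
        rcases lt_or_gt_of_ne hμ with h | h
        · exact Or.inl h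
        · exact Or.inr h
    have hsem := hval (PDLaux.AW φ) (PDLaux.Smod φ) hS w0
    exact hφnot ((PDLaux.tlF φ φ hφΓ0 w0).2 hsem)
  · intro hp
    exact PDLaux.soundness hp
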